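/- Let X_1,…,X_m ∈ ℝ^k with mean X̄ = (1/m)Σ X_i and S = Σ_{i=1}^m (X_i − X̄)(X_i − X̄)ᵀ invertible. For a fixed target x* ∈ ℝ^k, the unique solution of: minimize Σ_{i=1}^m (w_i − 1/m)² subject to Σ w_i = 1 and Σ w_i X_i = x*, is w_i = 1/m + (X_i − X̄)ᵀ S⁻¹ (x* − X̄). -/

import Mathlib

open Matrix Finset

/-- The MRI implied weights `w*_i = 1/m + (X_i − X̄)ᵀ S⁻¹ (x* − X̄)` are the unique
solution of: minimize `∑ (w_i − 1/m)²` subject to `∑ w_i = 1` and `∑ w_i X_i = x*`. -/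
theorem mri_weights_optimality {m k : ℕ} (hm : 0 < m)
    (X : Fin m → Fin k → ℝ) (xstar : Fin k → ℝ)
    (Xbar : Fin k → ℝ) (hXbar : Xbar = (m : ℝ)⁻¹ • ∑ i, X i)
    (S : Matrix (Fin k) (Fin k) ℝ)
    (hS : S = ∑ i, vecMulVec (X i - Xbar) (X i - Xbar))
    (hSinv : IsUnit S.det)
    (wstar : Fin m → ℝ)
    (hwstar : ∀ i, wstar i = (m : ℝ)⁻¹ + (X i - Xbar) ⬝ᵥ S⁻¹.mulVec (xstar - Xbar)) :
    ((∑ i, wstar i = 1) ∧ (∑ i, wstar i • X i = xstar)) ∧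
      ∀ w : Fin m → ℝ, (∑ i, w i = 1) → (∑ i, w i • X i = xstar) →
        (∑ i, (wstar i - (m : ℝ)⁻¹) ^ 2 ≤ ∑ i, (w i - (m : ℝ)⁻¹) ^ 2) ∧
        (∑ i, (w i - (m : ℝ)⁻¹) ^ 2 = ∑ i, (wstar i - (m : ℝ)⁻¹) ^ 2 → w = wstar) := by
  have hm' : (m : ℝ) ≠ 0 := Nat.cast_ne_zero.mpr hm.ne'
  set c : Fin k → ℝ := S⁻¹.mulVec (xstar - Xbar) with hc
  set e : Fin m → ℝ := fun i => (X i - Xbar) ⬝ᵥ c with he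
  -- sums of X over coordinates
  have hX' : ∀ j, ∑ i, X i j = (m : ℝ) * Xbar j := by
    intro j
    have := congrFun hXbar j
    simp only [Pi.smul_apply, Finset.sum_apply, smul_eq_mul] at this
    rw [this]; field_simp
  -- key linear identity for feasible w
  have key : ∀ w : Fin m → ℝ, (∑ i, w i = 1) → (∑ i, w i • X i = xstar) →
      ∑ i, (w i - (m : ℝ)⁻¹) * e i = (xstar - Xbar) ⬝ᵥ c := by
    intro w h1 h2
    have h2' : ∀ j, ∑ i, w i * X i j = xstar j := by
      intro j
      have := congrFun h2 j
      simpa [Finset.sum_apply] using this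
    have hv : ∀ j, ∑ i, (w i - (m : ℝ)⁻¹) * (X i j - Xbar j) = xstar j - Xbar j := by
      intro j
      have expand : ∀ i, (w i - (m : ℝ)⁻¹) * (X i j - Xbar j)
          = w i * X i j - Xbar j * w i - (m : ℝ)⁻¹ * X i j + (m : ℝ)⁻¹ * Xbar j := by
        intro i; ring
      rw [Finset.sum_congr rfl fun i _ => expand i]
      rw [Finset.sum_add_distrib, Finset.sum_sub_distrib, Finset.sum_sub_distrib,
        ← Finset.mul_sum, ← Finset.mul_sum, ← Finset.mul_sum, h2' j, h1, hX' j,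
        Finset.sum_const, Finset.card_univ, Fintype.card_fin, nsmul_eq_mul]
      field_simp; ring
    calc ∑ i, (w i - (m : ℝ)⁻¹) * e i
        = ∑ j, (∑ i, (w i - (m : ℝ)⁻¹) * (X i j - Xbar j)) * c j := by
          simp only [he, dotProduct, Pi.sub_apply, Finset.mul_sum, Finset.sum_mul]
          rw [Finset.sum_comm]
          apply Finset.sum_congr rfl; intro j _
          apply Finset.sum_congr rfl; intro i _
          ring
      _ = (xstar - Xbar) ⬝ᵥ c := by
          simp only [dotProduct, Pi.sub_apply]
          exact Finset.sum_congr rfl fun j _ => by rw [hv j]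
  -- ∑ e i = 0
  have hsume : ∑ i, e i = 0 := by
    simp only [he, dotProduct, Pi.sub_apply]
    rw [Finset.sum_comm]
    apply Finset.sum_eq_zero; intro j _
    rw [← Finset.sum_mul, Finset.sum_sub_distrib, hX' j, Finset.sum_const,
      Finset.card_univ, Fintype.card_fin, nsmul_eq_mul]
    ring
  -- S applied to c
  have hSc : S *ᵥ c = xstar - Xbar := by
    rw [hc, Matrix.mulVec_mulVec, Matrix.mul_nonsing_inv S hSinv, Matrix.one_mulVec]
  -- ∑ i, e i * (X i j - Xbar j) = (S *ᵥ c) j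
  have hSc' : ∀ j, ∑ i, e i * (X i j - Xbar j) = xstar j - Xbar j := by
    intro j
    have := congrFun hSc j
    rw [Pi.sub_apply] at this
    rw [← this]
    simp only [Matrix.mulVec, dotProduct, hS, Matrix.sum_apply,
      Matrix.vecMulVec_apply, Pi.sub_apply, he, Finset.sum_mul]
    rw [Finset.sum_comm]
    apply Finset.sum_congr rfl; intro i _
    apply Finset.sum_congr rfl; intro j' _
    ring
  -- feasibility of wstar
  have hw1 : ∑ i, wstar i = 1 := by
    have : ∑ i, wstar i = ∑ i, ((m : ℝ)⁻¹ + e i) := by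
      exact Finset.sum_congr rfl fun i _ => hwstar i
    rw [this, Finset.sum_add_distrib, hsume, Finset.sum_const, Finset.card_univ,
      Fintype.card_fin, nsmul_eq_mul]
    field_simp; ring
  have hw2 : ∑ i, wstar i • X i = xstar := by
    funext j
    simp only [Finset.sum_apply, Pi.smul_apply, smul_eq_mul]
    have : ∀ i, wstar i * X i j = (m : ℝ)⁻¹ * X i j + e i * (X i j - Xbar j) + e i * Xbar j := by
      intro i; rw [hwstar i]; ring
    rw [Finset.sum_congr rfl fun i _ => this i, Finset.sum_add_distrib,
      Finset.sum_add_distrib, ← Finset.mul_sum, hX' j, hSc' j, ← Finset.sum_mul, hsume]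
    field_simp; ring
  have hestar : ∀ i, wstar i - (m : ℝ)⁻¹ = e i := by
    intro i; rw [hwstar i]; ring
  have hKstar : ∑ i, e i * e i = (xstar - Xbar) ⬝ᵥ c := by
    have := key wstar hw1 hw2
    rw [← this]
    exact Finset.sum_congr rfl fun i _ => by rw [hestar i]
  refine ⟨⟨hw1, hw2⟩, ?_⟩
  intro w h1 h2
  have hK := key w h1 h2
  have hstar2 : ∑ i, (wstar i - (m : ℝ)⁻¹) ^ 2 = ∑ i, e i * e i :=
    Finset.sum_congr rfl fun i _ => by rw [hestar i]; ring
  have hA : ∑ i, (w i - (m : ℝ)⁻¹) ^ 2 - ∑ i, ((w i - (m : ℝ)⁻¹) - e i) ^ 2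
      = ∑ i, (2 * ((w i - (m : ℝ)⁻¹) * e i) - e i * e i) := by
    rw [← Finset.sum_sub_distrib]
    exact Finset.sum_congr rfl fun i _ => by ring
  have hB : ∑ i, (2 * ((w i - (m : ℝ)⁻¹) * e i) - e i * e i)
      = (xstar - Xbar) ⬝ᵥ c := by
    rw [Finset.sum_sub_distrib, ← Finset.mul_sum, hK, hKstar]; ring
  have hdecomp : ∑ i, (w i - (m : ℝ)⁻¹) ^ 2
      = ∑ i, ((w i - (m : ℝ)⁻¹) - e i) ^ 2 + ∑ i, (wstar i - (m : ℝ)⁻¹) ^ 2 := by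
    have := hKstar
    rw [hstar2]; linarith [hA, hB]
  have hnn : (0 : ℝ) ≤ ∑ i, ((w i - (m : ℝ)⁻¹) - e i) ^ 2 :=
    Finset.sum_nonneg fun i _ => sq_nonneg _
  constructor
  · linarith [hdecomp]
  · intro heq
    have hzero : ∑ i, ((w i - (m : ℝ)⁻¹) - e i) ^ 2 = 0 := by linarith
    have := (Finset.sum_eq_zero_iff_of_nonneg (fun i _ => sq_nonneg
      ((w i - (m : ℝ)⁻¹) - e i))).mp hzero
    funext i
    have hi := this i (Finset.mem_univ i)
    have : (w i - (m : ℝ)⁻¹) - e i = 0 := by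
      exact pow_eq_zero_iff (two_ne_zero) |>.mp hi
    have := sub_eq_zero.mp this
    rw [hwstar i]
    linarith [this]
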